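/- arXiv:1705.01241 — 3 statements merged into one kernel-verified Lean document; each statement's English description precedes it below -/
import Mathlib

section
/- For n ≥ 1, the degenerate Eulerian polynomial satisfies (t-1) A_{n,λ}(t) = Σ_{k=0}^{n-1} C(n,k) A_{k,λ}(t) (t-1)_{n-k,λ}. -/
open Polynomial

/-- The `λ`-falling factorial `(t-1)_{m,λ} = (t-1)(t-1-λ)⋯(t-1-(m-1)λ)` as a
polynomial in `t` over `ℚ`. -/
noncomputable def degFallTsub1 (lam : ℚ) (m : ℕ) : Polynomial ℚ :=
  ∏ i ∈ Finset.range m, ((X : Polynomial ℚ) - 1 - C ((i : ℚ) * lam))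

/-- For the degenerate Eulerian polynomials `A_{n,λ}(t)` (defined by
`(Σ_n A_{n,λ}(t) x^n/n!) · ((1+λx)^{(t-1)/λ} - t) = 1 - t`) and `n ≥ 1`:
`(t-1)·A_{n,λ}(t) = Σ_{k=0}^{n-1} C(n,k) A_{k,λ}(t) (t-1)_{n-k,λ}`. -/
theorem degenerate_eulerian_rec (lam : ℚ) (A : ℕ → Polynomial ℚ)
    (hA : (PowerSeries.mk fun n => (n.factorial : ℚ)⁻¹ • A n) *
        ((PowerSeries.mk fun m => (m.factorial : ℚ)⁻¹ • degFallTsub1 lam m)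
          - PowerSeries.C (X : Polynomial ℚ))
      = PowerSeries.C ((1 - X : Polynomial ℚ))) :
    ∀ n, 1 ≤ n →
      ((X : Polynomial ℚ) - 1) * A n
        = ∑ k ∈ Finset.range n, (n.choose k) • (A k * degFallTsub1 lam (n - k)) := by
  intro n hn
  have h := congrArg (PowerSeries.coeff n) hA
  rw [PowerSeries.coeff_mul, PowerSeries.coeff_C, if_neg (by omega)] at h
  simp only [map_sub, PowerSeries.coeff_mk, PowerSeries.coeff_C] at h
  rw [Finset.Nat.sum_antidiagonal_eq_sum_range_succ
    (f := fun i j => ((i.factorial : ℚ)⁻¹ • A i) *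
      (((j.factorial : ℚ)⁻¹ • degFallTsub1 lam j) - if j = 0 then X else 0))] at h
  rw [Finset.sum_range_succ] at h
  have hb0 : degFallTsub1 lam 0 = 1 := by simp [degFallTsub1]
  rw [Nat.sub_self] at h
  simp only [hb0, Nat.factorial_zero, Nat.cast_one, inv_one, one_smul, if_pos rfl, if_true] at h
  have h2 : ∀ k ∈ Finset.range n,
      ((k.factorial : ℚ)⁻¹ • A k) *
        ((((n-k).factorial : ℚ)⁻¹ • degFallTsub1 lam (n-k)) - if n - k = 0 then X else 0)
      = ((k.factorial : ℚ)⁻¹ * (((n-k).factorial : ℚ)⁻¹)) • (A k * degFallTsub1 lam (n-k)) := by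
    intro k hk
    rw [Finset.mem_range] at hk
    rw [if_neg (by omega), sub_zero, smul_mul_smul_comm]
  rw [Finset.sum_congr rfl h2] at h
  -- h : ∑ + (n!⁻¹ • A n) * (1 - X) = 0
  have key : ((n.factorial : ℚ)⁻¹ • A n) * (X - 1)
      = ∑ k ∈ Finset.range n,
        ((k.factorial : ℚ)⁻¹ * (((n-k).factorial : ℚ)⁻¹)) • (A k * degFallTsub1 lam (n-k)) := by
    linear_combination -h
  have h3 := congrArg (fun p => (n.factorial : ℚ) • p) key
  simp only [Finset.smul_sum, smul_smul, smul_mul_assoc] at h3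
  rw [mul_inv_cancel₀ (by exact_mod_cast n.factorial_ne_zero), one_smul] at h3
  rw [mul_comm, h3]
  refine Finset.sum_congr rfl fun k hk => ?_
  rw [Finset.mem_range] at hk
  have hkn : k ≤ n := hk.le
  rw [← Nat.cast_smul_eq_nsmul ℚ, Nat.cast_choose ℚ hkn]
  congr 1
  field_simp
end

section
/- The degenerate Eulerian polynomial A_{n,λ}(t) equals Σ_{k=0}^{n} A_k(t) λ^{n-k} S_1(n,k), where A_k(t) are the ordinary Eulerian polynomials and S_1(n,k) the (signed) Stirling numbers of the first kind. -/
open Polynomial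

/-- The formal power series `log(1+t) = Σ_{m≥1} (-1)^{m+1} t^m / m` over ℚ. -/
noncomputable def logOneAdd : PowerSeries ℚ :=
  PowerSeries.mk fun m => if m = 0 then 0 else (-1 : ℚ) ^ (m + 1) / m

/-- The signed Stirling numbers of the first kind, defined by
`(log(1+t))^k / k! = Σ_{n≥k} S₁(n,k) t^n/n!`. -/
noncomputable def S1 (n k : ℕ) : ℚ :=
  (n.factorial : ℚ) * PowerSeries.coeff n ((k.factorial : ℚ)⁻¹ • logOneAdd ^ k)

namespace DegEulAux


open PowerSeries Finset

lemma coeff_pow_eq_zero {R : Type*} [CommRing R] {f : PowerSeries R}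
    (hf : PowerSeries.constantCoeff f = 0) {n k : ℕ} (h : n < k) :
    PowerSeries.coeff n (f ^ k) = 0 :=
  PowerSeries.X_pow_dvd_iff.mp (pow_dvd_pow_of_dvd (PowerSeries.X_dvd_iff.mpr hf) k) n h

lemma constantCoeff_logOneAdd : PowerSeries.constantCoeff logOneAdd = 0 := by
  rw [← PowerSeries.coeff_zero_eq_constantCoeff_apply, logOneAdd, PowerSeries.coeff_mk]
  simp

lemma S1_eq (n k : ℕ) :
    S1 n k = (n.factorial : ℚ) * ((k.factorial : ℚ)⁻¹ * PowerSeries.coeff n (logOneAdd ^ k)) := by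
  rw [S1, map_smul, smul_eq_mul]

lemma S1_of_lt {n k : ℕ} (h : n < k) : S1 n k = 0 := by
  rw [S1_eq, coeff_pow_eq_zero constantCoeff_logOneAdd h]; ring

lemma S1_zero_right (n : ℕ) : S1 n 0 = if n = 0 then 1 else 0 := by
  rw [S1_eq]
  simp [PowerSeries.coeff_one]
  split_ifs with h <;> simp [h, Nat.factorial]

lemma S1_zero_zero : S1 0 0 = 1 := by simp [S1_zero_right]



lemma coeff_derivativeFun' (f : PowerSeries ℚ) (n : ℕ) :
    PowerSeries.coeff n (PowerSeries.derivativeFun f) = PowerSeries.coeff (n + 1) f * (n + 1) :=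
  PowerSeries.coeff_derivative f n

lemma constantCoeff_derivativeFun' (f : PowerSeries ℚ) :
    PowerSeries.constantCoeff (PowerSeries.derivativeFun f) = PowerSeries.coeff 1 f := by
  rw [← PowerSeries.coeff_zero_eq_constantCoeff_apply, coeff_derivativeFun']
  simp

lemma one_add_X_mul_d_logOneAdd :
    ((1 + PowerSeries.X) * PowerSeries.derivativeFun logOneAdd : PowerSeries ℚ) = 1 := by
  ext n
  rw [add_mul, one_mul, map_add]
  rcases n with _ | m
  · simp [coeff_derivativeFun', constantCoeff_derivativeFun', logOneAdd]
  · rw [PowerSeries.coeff_succ_X_mul, coeff_derivativeFun',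
      coeff_derivativeFun']
    simp [logOneAdd, PowerSeries.coeff_one, PowerSeries.coeff_mk, Nat.succ_ne_zero]
    push_cast
    field_simp
    ring

lemma key_E (k : ℕ) :
    ((1 + PowerSeries.X) * PowerSeries.derivativeFun (logOneAdd ^ (k + 1)) : PowerSeries ℚ)
      = ((k : ℚ) + 1) • logOneAdd ^ k := by
  have h := Derivation.leibniz_pow (PowerSeries.derivative ℚ) logOneAdd (k + 1)
  rw [Nat.add_sub_cancel, smul_eq_mul] at h
  have h' : PowerSeries.derivativeFun (logOneAdd ^ (k + 1))
      = (k + 1) • (logOneAdd ^ k * PowerSeries.derivativeFun logOneAdd) := h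
  rw [h', mul_smul_comm,
    show ((1 + PowerSeries.X) * (logOneAdd ^ k * PowerSeries.derivativeFun logOneAdd))
      = ((1 + PowerSeries.X) * PowerSeries.derivativeFun logOneAdd) * logOneAdd ^ k from by ring,
    one_add_X_mul_d_logOneAdd, one_mul, ← Nat.cast_smul_eq_nsmul ℚ]
  push_cast
  rfl

lemma coeff_rel (n k : ℕ) :
    ((n : ℚ) + 1) * PowerSeries.coeff (n + 1) (logOneAdd ^ (k + 1))
      + (n : ℚ) * PowerSeries.coeff n (logOneAdd ^ (k + 1))
      = ((k : ℚ) + 1) * PowerSeries.coeff n (logOneAdd ^ k) := by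
  have h := congrArg (PowerSeries.coeff n) (key_E k)
  rw [map_smul, smul_eq_mul, add_mul, one_mul, map_add,
    coeff_derivativeFun'] at h
  rcases n with _ | m
  · simpa using h
  · rw [PowerSeries.coeff_succ_X_mul, coeff_derivativeFun'] at h
    push_cast at h ⊢
    linarith

lemma S1_rec (n k : ℕ) :
    S1 (n + 1) (k + 1) = S1 n k - (n : ℚ) * S1 n (k + 1) := by
  have h := coeff_rel n k
  have hn : ((n.factorial : ℚ)) ≠ 0 := Nat.cast_ne_zero.mpr n.factorial_ne_zero
  have hk : ((k.factorial : ℚ)) ≠ 0 := Nat.cast_ne_zero.mpr k.factorial_ne_zero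
  rw [S1_eq, S1_eq, S1_eq, Nat.factorial_succ, Nat.factorial_succ]
  push_cast
  field_simp
  linear_combination h

lemma S1_diag (n : ℕ) : S1 n n = 1 := by
  induction n with
  | zero => exact S1_zero_zero
  | succ m ih => rw [S1_rec, ih, S1_of_lt (Nat.lt_succ_self m)]; ring


open Finset

lemma nat_mul_S1_zero (n : ℕ) : (n : ℚ) * S1 n 0 = 0 := by
  rcases n with _ | m
  · simp
  · rw [S1_zero_right]; simp

lemma degFall_eq (lam : ℚ) (n : ℕ) :
    degFallTsub1 lam n
      = ∑ m ∈ Finset.range (n + 1), (lam ^ (n - m) * S1 n m) • ((X : Polynomial ℚ) - 1) ^ m := by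
  induction n with
  | zero => simp [degFallTsub1, S1_zero_zero]
  | succ n ih =>
    have hstep : degFallTsub1 lam (n + 1)
        = degFallTsub1 lam n * ((X : Polynomial ℚ) - 1 - Polynomial.C ((n : ℚ) * lam)) := by
      rw [degFallTsub1, degFallTsub1, Finset.prod_range_succ]
    rw [hstep, ih]
    -- RHS of goal: peel off m = 0 and reindex
    rw [Finset.sum_range_succ' _ (n + 1)]
    have h0 : (lam ^ (n + 1 - 0) * S1 (n + 1) 0) • ((X : Polynomial ℚ) - 1) ^ 0 = 0 := by
      rw [S1_zero_right]; simp
    rw [h0, add_zero]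
    rw [mul_sub]
    have e1 : (∑ m ∈ range (n + 1), (lam ^ (n - m) * S1 n m) • ((X : Polynomial ℚ) - 1) ^ m)
        * ((X : Polynomial ℚ) - 1)
        = ∑ k ∈ range (n + 1), (lam ^ (n - k) * S1 n k) • ((X : Polynomial ℚ) - 1) ^ (k + 1) := by
      rw [Finset.sum_mul]
      exact Finset.sum_congr rfl fun k _ => by rw [smul_mul_assoc, ← pow_succ]
    have e2 : (∑ m ∈ range (n + 1), (lam ^ (n - m) * S1 n m) • ((X : Polynomial ℚ) - 1) ^ m)
        * Polynomial.C ((n : ℚ) * lam)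
        = ∑ m ∈ range (n + 1),
            ((lam ^ (n - m) * S1 n m) * ((n : ℚ) * lam)) • ((X : Polynomial ℚ) - 1) ^ m := by
      rw [Finset.sum_mul]
      refine Finset.sum_congr rfl fun m _ => ?_
      rw [smul_mul_assoc, mul_comm _ (Polynomial.C ((n : ℚ) * lam)), ← Polynomial.smul_eq_C_mul, smul_smul]
    rw [e1, e2]
    have e3 : ∀ k ∈ range (n + 1),
        (lam ^ (n + 1 - (k + 1)) * S1 (n + 1) (k + 1)) • ((X : Polynomial ℚ) - 1) ^ (k + 1)
        = (lam ^ (n - k) * S1 n k) • ((X : Polynomial ℚ) - 1) ^ (k + 1)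
          - (lam ^ (n - k) * ((n : ℚ) * S1 n (k + 1))) • ((X : Polynomial ℚ) - 1) ^ (k + 1) := by
      intro k _
      rw [Nat.succ_sub_succ, S1_rec, ← sub_smul]
      ring_nf
    rw [Finset.sum_congr rfl e3, Finset.sum_sub_distrib, sub_right_inj]
    rw [Finset.sum_range_succ' _ n, Finset.sum_range_succ _ n]
    rw [S1_zero_right]
    have hz1 : ((lam ^ (n - 0) * (if n = 0 then (1:ℚ) else 0)) * ((n : ℚ) * lam)) •
        ((X : Polynomial ℚ) - 1) ^ 0 = 0 := by
      rcases Nat.eq_zero_or_pos n with h | h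
      · subst h; simp
      · rw [if_neg (Nat.pos_iff_ne_zero.mp h)]; simp
    have hz2 : (lam ^ (n - n) * ((n : ℚ) * S1 n (n + 1))) • ((X : Polynomial ℚ) - 1) ^ (n + 1)
        = 0 := by
      rw [S1_of_lt (Nat.lt_succ_self n)]; simp
    rw [hz1, hz2, add_zero, add_zero]
    refine Finset.sum_congr rfl fun k hk => ?_
    have hk' : k < n := Finset.mem_range.mp hk
    have hpow : lam ^ (n - k) = lam ^ (n - (k + 1)) * lam := by
      rw [← pow_succ]; congr 1; omega
    rw [hpow]; ring_nf


open Finset PowerSeries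

noncomputable def yser (lam : ℚ) : PowerSeries ℚ :=
  PowerSeries.mk fun m => if m = 0 then 0 else (-1 : ℚ) ^ (m + 1) * lam ^ (m - 1) / m

lemma constantCoeff_yser (lam : ℚ) : PowerSeries.constantCoeff (yser lam) = 0 := by
  rw [← PowerSeries.coeff_zero_eq_constantCoeff_apply, yser, PowerSeries.coeff_mk]; simp

lemma yser_zero : yser 0 = PowerSeries.X := by
  ext m
  rw [yser, PowerSeries.coeff_mk, PowerSeries.coeff_X]
  rcases m with _ | m
  · simp
  · rcases m with _ | m
    · norm_num
    · simp [Nat.succ_ne_zero]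

lemma yser_ne_zero (lam : ℚ) (h : lam ≠ 0) :
    yser lam = lam⁻¹ • (PowerSeries.rescale lam logOneAdd) := by
  ext m
  rw [yser, PowerSeries.coeff_mk, PowerSeries.coeff_smul, PowerSeries.coeff_rescale, logOneAdd,
    PowerSeries.coeff_mk]
  rcases m with _ | m
  · simp
  · rw [if_neg (Nat.succ_ne_zero m), if_neg (Nat.succ_ne_zero m), smul_eq_mul]
    rw [show m + 1 - 1 = m from rfl, pow_succ]
    field_simp
    ring

lemma ycoeff (lam : ℚ) (n k : ℕ) :
    PowerSeries.coeff n (yser lam ^ k)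
      = lam ^ (n - k) * S1 n k * (k.factorial : ℚ) / (n.factorial : ℚ) := by
  rcases lt_or_ge n k with h | h
  · rw [coeff_pow_eq_zero (constantCoeff_yser lam) h, S1_of_lt h]; ring
  · rcases eq_or_ne lam 0 with rfl | hlam
    · rw [yser_zero, PowerSeries.coeff_X_pow]
      rcases eq_or_ne n k with rfl | hne
      · rw [if_pos rfl, S1_diag, Nat.sub_self, pow_zero]
        field_simp
      · rw [if_neg hne]
        have hk : k < n := lt_of_le_of_ne h (Ne.symm hne)
        rw [zero_pow (by omega : n - k ≠ 0)]
        ring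
    · rw [yser_ne_zero lam hlam, _root_.smul_pow, ← map_pow, PowerSeries.coeff_smul,
        PowerSeries.coeff_rescale, S1_eq, smul_eq_mul]
      have h1 : lam ^ (n - k) = (lam ⁻¹) ^ k * lam ^ n := by
        rw [inv_pow, inv_mul_eq_div, eq_div_iff (pow_ne_zero k hlam), ← pow_add]
        congr 1
        omega
      rw [h1]
      have hn : ((n.factorial : ℚ)) ≠ 0 := Nat.cast_ne_zero.mpr n.factorial_ne_zero
      have hk : ((k.factorial : ℚ)) ≠ 0 := Nat.cast_ne_zero.mpr k.factorial_ne_zero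
      field_simp


open Finset

lemma tri {M : Type*} [AddCommMonoid M] (N : ℕ) (t : ℕ → ℕ → M)
    (hvan : ∀ k m, N < k + m → t k m = 0) :
    ∑ k ∈ range (N + 1), ∑ m ∈ range (N + 1), t k m
      = ∑ j ∈ range (N + 1), ∑ k ∈ range (j + 1), t k (j - k) := by
  rw [← Finset.sum_product', Finset.sum_sigma' (range (N + 1)) (fun j => range (j + 1)) (fun j k => t k (j - k))]
  rw [← Finset.sum_filter_of_ne
    (p := fun p : ℕ × ℕ => p.1 + p.2 ≤ N)
    (fun p _ hne => by by_contra h; exact hne (hvan p.1 p.2 (by omega)))]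
  refine Finset.sum_nbij' (fun p => ⟨p.1 + p.2, p.1⟩) (fun q => (q.2, q.1 - q.2)) ?_ ?_ ?_ ?_ ?_
  · intro p hp
    simp only [Finset.mem_filter, Finset.mem_sigma, Finset.mem_range, Finset.mem_product] at *
    omega
  · intro q hq
    simp only [Finset.mem_filter, Finset.mem_sigma, Finset.mem_range, Finset.mem_product] at *
    omega
  · intro p hp
    simp only [Finset.mem_filter, Finset.mem_range, Finset.mem_product] at hp
    simp only [Nat.add_sub_cancel_left]
  · intro q hq
    simp only [Finset.mem_sigma, Finset.mem_range] at hq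
    ext <;> simp <;> omega
  · intro p hp
    simp only [Nat.add_sub_cancel_left]


noncomputable def Yser (lam : ℚ) : PowerSeries (Polynomial ℚ) :=
  PowerSeries.map Polynomial.C (yser lam)

lemma coeff_Yser_pow (lam : ℚ) (n k : ℕ) :
    PowerSeries.coeff n (Yser lam ^ k)
      = Polynomial.C (PowerSeries.coeff n (yser lam ^ k)) := by
  rw [Yser, ← map_pow, PowerSeries.coeff_map]

noncomputable def Pfin (lam : ℚ) (P : ℕ → Polynomial ℚ) (N : ℕ) : PowerSeries (Polynomial ℚ) :=
  ∑ k ∈ Finset.range (N + 1),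
    PowerSeries.C ((k.factorial : ℚ)⁻¹ • P k) * Yser lam ^ k

lemma coeff_Pfin (lam : ℚ) (P : ℕ → Polynomial ℚ) (N n : ℕ) :
    PowerSeries.coeff n (Pfin lam P N)
      = ∑ k ∈ Finset.range (N + 1), ((lam ^ (n - k) * S1 n k) / n.factorial) • P k := by
  rw [Pfin, map_sum]
  refine Finset.sum_congr rfl fun k _ => ?_
  rw [PowerSeries.coeff_C_mul, coeff_Yser_pow, ycoeff, mul_comm, ← Polynomial.smul_eq_C_mul,
    smul_smul]
  congr 1
  have hk : ((k.factorial : ℚ)) ≠ 0 := Nat.cast_ne_zero.mpr k.factorial_ne_zero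
  field_simp

lemma coeff_Pfin_of_le (lam : ℚ) (P : ℕ → Polynomial ℚ) {N n : ℕ} (h : n ≤ N) :
    PowerSeries.coeff n (Pfin lam P N)
      = ∑ k ∈ Finset.range (n + 1), ((lam ^ (n - k) * S1 n k) / n.factorial) • P k := by
  rw [coeff_Pfin]
  refine (Finset.sum_subset (Finset.range_subset_range.mpr (by omega)) ?_).symm
  intro k hk hk'
  simp only [Finset.mem_range] at hk hk'
  rw [S1_of_lt (by omega)]
  simp

lemma coeff_mul_congr {f f' g g' : PowerSeries (Polynomial ℚ)} {N : ℕ}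
    (hf : ∀ i ≤ N, PowerSeries.coeff i f = PowerSeries.coeff i f')
    (hg : ∀ i ≤ N, PowerSeries.coeff i g = PowerSeries.coeff i g') :
    PowerSeries.coeff N (f * g) = PowerSeries.coeff N (f' * g') := by
  rw [PowerSeries.coeff_mul, PowerSeries.coeff_mul]
  refine Finset.sum_congr rfl fun p hp => ?_
  have hp' := Finset.HasAntidiagonal.mem_antidiagonal.mp hp
  rw [hf p.1 (by omega), hg p.2 (by omega)]

lemma star_of_hB (B : ℕ → Polynomial ℚ)
    (hB : (PowerSeries.mk fun n => (n.factorial : ℚ)⁻¹ • B n) *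
        ((PowerSeries.mk fun m => (m.factorial : ℚ)⁻¹ • ((Polynomial.X : Polynomial ℚ) - 1) ^ m)
          - PowerSeries.C Polynomial.X)
      = PowerSeries.C (1 - Polynomial.X)) (j : ℕ) :
    ∑ k ∈ Finset.range (j + 1),
        ((k.factorial : ℚ)⁻¹ * (((j - k).factorial : ℚ))⁻¹)
          • (B k * ((Polynomial.X : Polynomial ℚ) - 1) ^ (j - k))
      = (if j = 0 then 1 - (Polynomial.X : Polynomial ℚ) else 0)
        + (j.factorial : ℚ)⁻¹ • (B j * (Polynomial.X : Polynomial ℚ)) := by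
  have h := congrArg (PowerSeries.coeff j) hB
  rw [PowerSeries.coeff_mul, Finset.Nat.sum_antidiagonal_eq_sum_range_succ_mk,
    PowerSeries.coeff_C] at h
  simp only [map_sub, PowerSeries.coeff_mk, PowerSeries.coeff_C, mul_sub] at h
  rw [Finset.sum_sub_distrib] at h
  have h2 : ∑ k ∈ Finset.range (j + 1),
      ((k.factorial : ℚ)⁻¹ • B k) * (if j - k = 0 then (Polynomial.X : Polynomial ℚ) else 0)
      = (j.factorial : ℚ)⁻¹ • (B j * (Polynomial.X : Polynomial ℚ)) := by
    rw [Finset.sum_eq_single_of_mem j (Finset.self_mem_range_succ j)]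
    · rw [Nat.sub_self, if_pos rfl, smul_mul_assoc]
    · intro b hb hbj
      rw [if_neg (by simp only [Finset.mem_range] at hb; omega), mul_zero]
  rw [h2] at h
  have h3 : ∑ k ∈ Finset.range (j + 1),
      ((k.factorial : ℚ)⁻¹ • B k) * ((((j - k).factorial : ℚ))⁻¹ • ((Polynomial.X : Polynomial ℚ) - 1) ^ (j - k))
      = ∑ k ∈ Finset.range (j + 1),
        ((k.factorial : ℚ)⁻¹ * (((j - k).factorial : ℚ))⁻¹)
          • (B k * ((Polynomial.X : Polynomial ℚ) - 1) ^ (j - k)) :=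
    Finset.sum_congr rfl fun k _ => smul_mul_smul_comm _ _ _ _
  rw [h3] at h
  rw [sub_eq_iff_eq_add] at h
  rw [h]

lemma main_coeff (lam : ℚ) (B : ℕ → Polynomial ℚ)
    (hst : ∀ j, ∑ k ∈ Finset.range (j + 1),
        ((k.factorial : ℚ)⁻¹ * (((j - k).factorial : ℚ))⁻¹)
          • (B k * ((Polynomial.X : Polynomial ℚ) - 1) ^ (j - k))
      = (if j = 0 then 1 - (Polynomial.X : Polynomial ℚ) else 0)
        + (j.factorial : ℚ)⁻¹ • (B j * (Polynomial.X : Polynomial ℚ))) (N : ℕ) :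
    PowerSeries.coeff N
        (Pfin lam B N * (Pfin lam (fun m => ((Polynomial.X : Polynomial ℚ) - 1) ^ m) N
          - PowerSeries.C Polynomial.X))
      = if N = 0 then 1 - (Polynomial.X : Polynomial ℚ) else 0 := by
  rw [mul_sub, map_sub]
  have hpart2 : PowerSeries.coeff N
      (Pfin lam B N * PowerSeries.C Polynomial.X)
      = ∑ k ∈ Finset.range (N + 1),
          (((k.factorial : ℚ)⁻¹ • B k)
            * Polynomial.C (PowerSeries.coeff N (yser lam ^ k))) * Polynomial.X := by
    rw [PowerSeries.coeff_mul_C, Pfin, map_sum, Finset.sum_mul]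
    refine Finset.sum_congr rfl fun k _ => ?_
    rw [PowerSeries.coeff_C_mul, coeff_Yser_pow]
  have hpart1 : PowerSeries.coeff N
      (Pfin lam B N * Pfin lam (fun m => ((Polynomial.X : Polynomial ℚ) - 1) ^ m) N)
      = ∑ k ∈ Finset.range (N + 1), ∑ m ∈ Finset.range (N + 1),
          (((k.factorial : ℚ)⁻¹ • B k) * ((m.factorial : ℚ)⁻¹ • ((Polynomial.X : Polynomial ℚ) - 1) ^ m))
            * Polynomial.C (PowerSeries.coeff N (yser lam ^ (k + m))) := by
    rw [Pfin, Pfin, Finset.sum_mul_sum]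
    simp only [map_sum]
    refine Finset.sum_congr rfl fun k _ => Finset.sum_congr rfl fun m _ => ?_
    have e : (PowerSeries.C ((k.factorial : ℚ)⁻¹ • B k) * Yser lam ^ k)
        * (PowerSeries.C
            ((m.factorial : ℚ)⁻¹ • ((Polynomial.X : Polynomial ℚ) - 1) ^ m) * Yser lam ^ m)
        = PowerSeries.C
            (((k.factorial : ℚ)⁻¹ • B k) * ((m.factorial : ℚ)⁻¹ • ((Polynomial.X : Polynomial ℚ) - 1) ^ m))
          * Yser lam ^ (k + m) := by
      rw [map_mul, pow_add]; ring
    rw [e, PowerSeries.coeff_C_mul, coeff_Yser_pow]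
  rw [hpart1, hpart2]
  rw [tri N _ (fun k m hkm => by
    rw [coeff_pow_eq_zero (constantCoeff_yser lam) hkm, map_zero, mul_zero])]
  have hj : ∀ j ∈ Finset.range (N + 1), ∑ k ∈ Finset.range (j + 1),
      (((k.factorial : ℚ)⁻¹ • B k)
        * (((j - k).factorial : ℚ)⁻¹ • ((Polynomial.X : Polynomial ℚ) - 1) ^ (j - k)))
        * Polynomial.C (PowerSeries.coeff N (yser lam ^ (k + (j - k))))
      = ((if j = 0 then 1 - (Polynomial.X : Polynomial ℚ) else 0)
          + (j.factorial : ℚ)⁻¹ • (B j * (Polynomial.X : Polynomial ℚ)))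
        * Polynomial.C (PowerSeries.coeff N (yser lam ^ j)) := by
    intro j _
    rw [← hst j, Finset.sum_mul]
    refine Finset.sum_congr rfl fun k hk => ?_
    have hkj : k + (j - k) = j := by
      simp only [Finset.mem_range] at hk; omega
    rw [hkj, smul_mul_smul_comm]
  rw [Finset.sum_congr rfl hj]
  simp only [add_mul]
  rw [Finset.sum_add_distrib]
  have hsumA : ∑ j ∈ Finset.range (N + 1),
      (if j = 0 then 1 - (Polynomial.X : Polynomial ℚ) else 0)
        * Polynomial.C (PowerSeries.coeff N (yser lam ^ j))
      = if N = 0 then 1 - (Polynomial.X : Polynomial ℚ) else 0 := by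
    rw [Finset.sum_eq_single_of_mem 0 (by simp)]
    · rw [if_pos rfl, pow_zero, PowerSeries.coeff_one]
      split_ifs with h
      · rw [map_one, mul_one]
      · rw [map_zero, mul_zero]
    · intro b _ hb
      rw [if_neg hb, zero_mul]
  have hsumB : ∑ j ∈ Finset.range (N + 1),
      ((j.factorial : ℚ)⁻¹ • (B j * (Polynomial.X : Polynomial ℚ)))
        * Polynomial.C (PowerSeries.coeff N (yser lam ^ j))
      = ∑ k ∈ Finset.range (N + 1),
          (((k.factorial : ℚ)⁻¹ • B k)
            * Polynomial.C (PowerSeries.coeff N (yser lam ^ k))) * Polynomial.X := by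
    refine Finset.sum_congr rfl fun j _ => ?_
    rw [Polynomial.smul_eq_C_mul, Polynomial.smul_eq_C_mul]
    ring
  rw [hsumA, hsumB]
  ring

end DegEulAux

/-- `A_{n,λ}(t) = Σ_{k=0}^n A_k(t) λ^{n-k} S₁(n,k)`, where `A` is the family of
degenerate Eulerian polynomials and `B` the ordinary Eulerian polynomials,
each characterized by its exponential generating function. -/
theorem degenerate_eulerian_eq_sum_stirling (lam : ℚ)
    (A B : ℕ → Polynomial ℚ)
    (hA : (PowerSeries.mk fun n => (n.factorial : ℚ)⁻¹ • A n) *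
        ((PowerSeries.mk fun m => (m.factorial : ℚ)⁻¹ • degFallTsub1 lam m)
          - PowerSeries.C X)
      = PowerSeries.C (1 - X))
    (hB : (PowerSeries.mk fun n => (n.factorial : ℚ)⁻¹ • B n) *
        ((PowerSeries.mk fun m => (m.factorial : ℚ)⁻¹ • ((X : Polynomial ℚ) - 1) ^ m)
          - PowerSeries.C X)
      = PowerSeries.C (1 - X)) :
    ∀ n, A n = ∑ k ∈ Finset.range (n + 1), (lam ^ (n - k) * S1 n k) • B k := by
  have hst := DegEulAux.star_of_hB B hB
  set F : PowerSeries (Polynomial ℚ) :=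
    PowerSeries.mk fun n => (n.factorial : ℚ)⁻¹ • A n with hFdef
  set G : PowerSeries (Polynomial ℚ) :=
    (PowerSeries.mk fun m => (m.factorial : ℚ)⁻¹ • degFallTsub1 lam m)
      - PowerSeries.C X with hGdef
  set F'' : PowerSeries (Polynomial ℚ) :=
    PowerSeries.mk fun n =>
      ∑ k ∈ Finset.range (n + 1), ((lam ^ (n - k) * S1 n k) / n.factorial) • B k with hF''def
  have hFG : F'' * G = PowerSeries.C (1 - X) := by
    ext N
    have hf : ∀ i ≤ N, PowerSeries.coeff i F''
        = PowerSeries.coeff i (DegEulAux.Pfin lam B N) := fun i hi => by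
      rw [hF''def, PowerSeries.coeff_mk, DegEulAux.coeff_Pfin_of_le lam B hi]
    have hg : ∀ i ≤ N, PowerSeries.coeff i G
        = PowerSeries.coeff i
            (DegEulAux.Pfin lam (fun m => ((X : Polynomial ℚ) - 1) ^ m) N
              - PowerSeries.C X) := fun i hi => by
      rw [hGdef, map_sub, map_sub, PowerSeries.coeff_mk,
        DegEulAux.coeff_Pfin_of_le _ _ hi]
      congr 1
      rw [DegEulAux.degFall_eq lam i, Finset.smul_sum]
      refine Finset.sum_congr rfl fun m _ => ?_
      rw [smul_smul, mul_comm, ← div_eq_mul_inv]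
    rw [DegEulAux.coeff_mul_congr hf hg, DegEulAux.main_coeff lam B hst N,
      PowerSeries.coeff_C]
  have hGne : G ≠ 0 := by
    intro h
    have h0 := congrArg (PowerSeries.coeff 0) h
    rw [hGdef, map_sub, PowerSeries.coeff_mk, PowerSeries.coeff_C, map_zero] at h0
    norm_num [degFallTsub1] at h0
    have h1 := congrArg (fun p => Polynomial.coeff p 1) h0
    norm_num [Polynomial.coeff_one] at h1
  have hFF : F = F'' := mul_right_cancel₀ hGne (hA.trans hFG.symm)
  intro n
  have h := congrArg (PowerSeries.coeff n) hFF
  rw [hFdef, hF''def, PowerSeries.coeff_mk, PowerSeries.coeff_mk] at h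
  have hn : ((n.factorial : ℚ)) ≠ 0 := Nat.cast_ne_zero.mpr n.factorial_ne_zero
  calc A n = (n.factorial : ℚ) • ((n.factorial : ℚ)⁻¹ • A n) := by
        rw [smul_smul, mul_inv_cancel₀ hn, one_smul]
    _ = (n.factorial : ℚ) • ∑ k ∈ Finset.range (n + 1),
          ((lam ^ (n - k) * S1 n k) / n.factorial) • B k := by rw [h]
    _ = ∑ k ∈ Finset.range (n + 1), (lam ^ (n - k) * S1 n k) • B k := by
        rw [Finset.smul_sum]
        refine Finset.sum_congr rfl fun k _ => ?_
        rw [smul_smul]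
        congr 1
        field_simp
end

section
/- For all n ≥ 0, A_{n,λ}(t) = Σ_{k=0}^n λ^{n-k} S_1(n,k) H_k(t) (t-1)^k, where H_k(t) are the Frobenius–Euler numbers at parameter t. -/
open PowerSeries Finset

noncomputable def uu (lam : ℚ) : PowerSeries ℚ :=
  PowerSeries.mk fun m => lam ^ (m - 1) * PowerSeries.coeff m logOneAdd

lemma constantCoeff_logOneAdd : PowerSeries.constantCoeff logOneAdd = 0 := by
  simp [logOneAdd, ← PowerSeries.coeff_zero_eq_constantCoeff]

lemma coeff_one_logOneAdd : PowerSeries.coeff 1 logOneAdd = 1 := by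
  simp [logOneAdd]

lemma coeff_pow_eq_zero {f : PowerSeries ℚ} (hf : PowerSeries.constantCoeff f = 0)
    {n k : ℕ} (h : n < k) : PowerSeries.coeff n (f ^ k) = 0 := by
  have : (PowerSeries.X : PowerSeries ℚ) ^ k ∣ f ^ k :=
    pow_dvd_pow_of_dvd (PowerSeries.X_dvd_iff.2 hf) k
  exact PowerSeries.X_pow_dvd_iff.1 this n h

lemma coeff_pow_self {f : PowerSeries ℚ} (hf : PowerSeries.constantCoeff f = 0)
    (k : ℕ) : PowerSeries.coeff k (f ^ k) = (PowerSeries.coeff 1 f) ^ k := by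
  obtain ⟨g, hg⟩ := PowerSeries.X_dvd_iff.2 hf
  have h1 : PowerSeries.coeff 1 f = PowerSeries.constantCoeff g := by
    rw [hg, ← PowerSeries.coeff_zero_eq_constantCoeff]
    simpa using PowerSeries.coeff_succ_X_mul 0 g
  have h2 : PowerSeries.coeff k (f ^ k) = PowerSeries.coeff 0 (g ^ k) := by
    rw [hg, mul_pow]
    simpa using PowerSeries.coeff_X_pow_mul (g ^ k) k 0
  rw [h2, h1, PowerSeries.coeff_zero_eq_constantCoeff, map_pow]

lemma constantCoeff_uu (lam : ℚ) : PowerSeries.constantCoeff (uu lam) = 0 := by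
  simp [uu, ← PowerSeries.coeff_zero_eq_constantCoeff, logOneAdd]

lemma uu_zero : uu 0 = PowerSeries.X := by
  ext m
  rw [uu, PowerSeries.coeff_mk, PowerSeries.coeff_X]
  match m with
  | 0 => simp [logOneAdd]
  | 1 => simp [coeff_one_logOneAdd]
  | (m+2) => simp

lemma uu_of_ne {lam : ℚ} (h : lam ≠ 0) :
    uu lam = lam⁻¹ • PowerSeries.rescale lam logOneAdd := by
  ext m
  rw [uu, PowerSeries.coeff_mk, PowerSeries.coeff_smul, PowerSeries.coeff_rescale]
  match m with
  | 0 => simp [logOneAdd]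
  | (m+1) =>
    have : lam ^ (m + 1) = lam * lam ^ m := pow_succ' lam m
    rw [Nat.add_sub_cancel, this]
    field_simp
    rw [smul_eq_mul, one_div, eq_inv_mul_iff_mul_eq₀ h, mul_comm lam]

lemma coeff_uu_pow (lam : ℚ) (n k : ℕ) :
    PowerSeries.coeff n ((uu lam) ^ k) =
      lam ^ (n - k) * PowerSeries.coeff n (logOneAdd ^ k) := by
  rcases lt_or_ge n k with h | h
  · rw [coeff_pow_eq_zero (constantCoeff_uu lam) h,
      coeff_pow_eq_zero constantCoeff_logOneAdd h, mul_zero]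
  · rcases eq_or_ne lam 0 with rfl | hlam
    · rw [uu_zero, PowerSeries.coeff_X_pow]
      rcases eq_or_lt_of_le h with rfl | h'
      · rw [if_pos rfl, Nat.sub_self, pow_zero, one_mul,
          coeff_pow_self constantCoeff_logOneAdd, coeff_one_logOneAdd, one_pow]
      · rw [if_neg (by omega), zero_pow (by omega), zero_mul]
    · rw [uu_of_ne hlam, smul_pow, ← map_pow, PowerSeries.coeff_smul,
        PowerSeries.coeff_rescale, smul_eq_mul]
      rw [pow_sub₀ lam hlam h]; ring

lemma hkey_uu (lam : ℚ) :
    (1 + lam • PowerSeries.X) * PowerSeries.derivative ℚ (uu lam) = 1 := by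
  have hD : PowerSeries.derivative ℚ (uu lam) = PowerSeries.mk fun m => (-lam) ^ m := by
    ext m
    rw [PowerSeries.coeff_derivative, uu, logOneAdd]
    simp only [PowerSeries.coeff_mk, Nat.add_sub_cancel]
    rw [if_neg (Nat.succ_ne_zero m)]
    have hm : ((m:ℚ)+1) ≠ 0 := by positivity
    push_cast
    field_simp
    ring
  rw [hD, add_mul, one_mul, smul_mul_assoc]
  ext n
  match n with
  | 0 =>
    simp [PowerSeries.coeff_smul, PowerSeries.coeff_zero_eq_constantCoeff]
  | (n+1) =>
    rw [map_add, PowerSeries.coeff_mk, PowerSeries.coeff_smul,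
      PowerSeries.coeff_succ_X_mul, PowerSeries.coeff_mk, PowerSeries.coeff_one,
      if_neg (Nat.succ_ne_zero n)]
    rw [pow_succ, smul_eq_mul]
    ring

lemma U_rec (lam : ℚ) (n k : ℕ) :
    ((n:ℚ)+1) * PowerSeries.coeff (n+1) ((uu lam)^(k+1))
      + lam * n * PowerSeries.coeff n ((uu lam)^(k+1))
      = ((k:ℚ)+1) * PowerSeries.coeff n ((uu lam)^k) := by
  have hpow : (1 + lam • PowerSeries.X) * PowerSeries.derivative ℚ ((uu lam)^(k+1))
      = ((k:ℚ)+1) • (uu lam)^k := by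
    rw [Derivation.leibniz_pow, Nat.add_sub_cancel, smul_eq_mul, nsmul_eq_mul]
    push_cast
    rw [show (1 + lam • PowerSeries.X) * (((k:ℚ⟦X⟧) + 1) * (uu lam ^ k * PowerSeries.derivative ℚ (uu lam)))
        = ((k:ℚ⟦X⟧) + 1) * (uu lam ^ k * ((1 + lam • PowerSeries.X) * PowerSeries.derivative ℚ (uu lam))) from by ring,
      hkey_uu, mul_one, PowerSeries.smul_eq_C_mul]
    congr 1
    simp [map_add, map_natCast]
  have h := congrArg (PowerSeries.coeff n) hpow
  rw [add_mul, one_mul, smul_mul_assoc, map_add, PowerSeries.coeff_smul,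
    PowerSeries.coeff_smul, PowerSeries.coeff_derivative, smul_eq_mul, smul_eq_mul] at h
  match n with
  | 0 =>
    rw [show ((0:ℕ):ℚ) = 0 from rfl] at *
    simpa [PowerSeries.coeff_zero_eq_constantCoeff, mul_comm] using h
  | (n+1) =>
    rw [PowerSeries.coeff_succ_X_mul, PowerSeries.coeff_derivative] at h
    push_cast at h ⊢
    nlinarith [h]

lemma fact_b (lam t : ℚ) (m : ℕ) :
    (∏ i ∈ Finset.range m, (t - 1 - (i:ℚ) * lam))
      = (m.factorial : ℚ) * ∑ k ∈ Finset.range (m+1),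
          (t-1)^k * ((k.factorial : ℚ))⁻¹ * PowerSeries.coeff m ((uu lam)^k) := by
  induction m with
  | zero => simp
  | succ m ih =>
    set U : ℕ → ℕ → ℚ := fun j k => PowerSeries.coeff j ((uu lam)^k) with hU
    set g : ℕ → ℚ := fun k => (t-1)^k * ((k.factorial : ℚ))⁻¹ * U m k with hg
    set f : ℕ → ℚ := fun k => (t-1)^k * ((k.factorial : ℚ))⁻¹ * U (m+1) k with hf
    rw [Finset.prod_range_succ, ih]
    have hf0 : f 0 = 0 := by
      simp only [hf, hU, pow_zero, PowerSeries.coeff_one]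
      simp
    have hgm1 : g (m+1) = 0 := by
      have : U m (m+1) = 0 := coeff_pow_eq_zero (constantCoeff_uu lam) (Nat.lt_succ_self m)
      simp [hg, this]
    have hterm : ∀ k, (((m+1).factorial:ℚ)) * f (k+1)
        = (m.factorial:ℚ) * ((t-1) * g k) - lam * m * ((m.factorial:ℚ) * g (k+1)) := by
      intro k
      have hrec := U_rec lam m k
      have hm1 : ((m:ℚ)+1) ≠ 0 := by positivity
      have hUval : U (m+1) (k+1)
          = (((k:ℚ)+1) * U m k - lam * m * U m (k+1)) / ((m:ℚ)+1) := by
        rw [eq_div_iff hm1]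
        linarith [hrec]
      simp only [hf, hg, hUval]
      rw [Nat.factorial_succ, Nat.factorial_succ]
      have hkf : ((k.factorial:ℚ)) ≠ 0 := Nat.cast_ne_zero.2 k.factorial_ne_zero
      have hmf : ((m.factorial:ℚ)) ≠ 0 := Nat.cast_ne_zero.2 m.factorial_ne_zero
      have hk1 : ((k:ℚ)+1) ≠ 0 := by positivity
      push_cast
      field_simp
      ring
    have hshift : ∑ k ∈ Finset.range (m+1), g (k+1)
        = (∑ k ∈ Finset.range (m+1), g k) - g 0 := by
      have h1 : ∑ k ∈ Finset.range (m+2), g k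
          = (∑ k ∈ Finset.range (m+1), g (k+1)) + g 0 := Finset.sum_range_succ' g (m+1)
      have h2 : ∑ k ∈ Finset.range (m+2), g k
          = (∑ k ∈ Finset.range (m+1), g k) + g (m+1) := Finset.sum_range_succ g (m+1)
      rw [hgm1, add_zero] at h2
      linarith [h1, h2]
    have hzero : lam * (m:ℚ) * g 0 = 0 := by
      rcases Nat.eq_zero_or_pos m with hm | hm
      · subst hm; simp
      · have : U m 0 = 0 := by
          simp only [hU, pow_zero, PowerSeries.coeff_one]
          simp [Nat.pos_iff_ne_zero.1 hm]
        simp [hg, this]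
    have e : ((m+1).factorial:ℚ) * (∑ k ∈ Finset.range (m+1), f (k+1))
        = (m.factorial:ℚ) * ((t-1) * ∑ k ∈ Finset.range (m+1), g k)
          - lam * m * ((m.factorial:ℚ) * ((∑ k ∈ Finset.range (m+1), g k) - g 0)) := by
      rw [Finset.mul_sum, Finset.sum_congr rfl (fun k _ => hterm k), Finset.sum_sub_distrib,
        ← Finset.mul_sum, ← Finset.mul_sum, ← Finset.mul_sum, ← Finset.mul_sum, hshift]
    rw [Finset.sum_range_succ' f (m+1), hf0, add_zero, e]
    linear_combination (-(m.factorial:ℚ)) * hzero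

lemma lam_pow_S1 (lam : ℚ) (n k : ℕ) :
    lam ^ (n - k) * S1 n k
      = (n.factorial : ℚ) * ((k.factorial : ℚ))⁻¹ * PowerSeries.coeff n ((uu lam)^k) := by
  rw [S1, PowerSeries.coeff_smul, coeff_uu_pow, smul_eq_mul]
  ring

/-- For `t ≠ 1`, the degenerate Eulerian numbers `A_{n,λ}(t)` (defined by
`(Σ_n A_{n,λ}(t) x^n/n!)·((1+λx)^{(t-1)/λ} - t) = 1-t`, with
`(1+λx)^{(t-1)/λ} = Σ_m (t-1)_{m,λ} x^m/m!`) satisfy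
`A_{n,λ}(t) = Σ_{k=0}^n λ^{n-k} S₁(n,k) H_k(t)(t-1)^k`, where `H_k(t)` are the
Frobenius–Euler numbers given by `(1-t)/(e^x - t) = Σ_k H_k(t) x^k/k!`. -/
theorem degenerate_eulerian_frobenius_euler (lam t : ℚ) (ht : t ≠ 1)
    (A H : ℕ → ℚ)
    (hA : (PowerSeries.mk fun n => (n.factorial : ℚ)⁻¹ * A n) *
        ((PowerSeries.mk fun m =>
            (m.factorial : ℚ)⁻¹ * ∏ i ∈ Finset.range m, (t - 1 - (i : ℚ) * lam))
          - PowerSeries.C t)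
      = PowerSeries.C (1 - t))
    (hH : (PowerSeries.mk fun k => (k.factorial : ℚ)⁻¹ * H k) *
        (PowerSeries.exp ℚ - PowerSeries.C t) = PowerSeries.C (1 - t)) :
    ∀ n, A n = ∑ k ∈ Finset.range (n + 1), lam ^ (n - k) * S1 n k * H k * (t - 1) ^ k := by
  classical
  set U : ℕ → ℕ → ℚ := fun j k => PowerSeries.coeff j ((uu lam)^k) with hUdef
  set D : PowerSeries ℚ := PowerSeries.mk fun m =>
      (m.factorial : ℚ)⁻¹ * ∏ i ∈ Finset.range m, (t - 1 - (i : ℚ) * lam) with hDdef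
  set Bs : PowerSeries ℚ := PowerSeries.mk fun j =>
      ∑ k ∈ Finset.range (j+1), H k * (t-1)^k * ((k.factorial:ℚ))⁻¹ * U j k with hBsdef
  have hUvanish : ∀ {j k : ℕ}, j < k → U j k = 0 :=
    fun h => coeff_pow_eq_zero (constantCoeff_uu lam) h
  have hBcoeff : ∀ {j M : ℕ}, j ≤ M → PowerSeries.coeff j Bs
      = ∑ k ∈ Finset.range (M+1), H k * (t-1)^k * ((k.factorial:ℚ))⁻¹ * U j k := by
    intro j M hjM
    rw [hBsdef, PowerSeries.coeff_mk]
    apply Finset.sum_subset (Finset.range_subset_range.2 (by omega))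
    intro k _ hk'
    exact mul_eq_zero_of_right _ (hUvanish (by simpa using hk'))
  have hDcoeff : ∀ {j M : ℕ}, j ≤ M → PowerSeries.coeff j D
      = ∑ k ∈ Finset.range (M+1), (t-1)^k * ((k.factorial:ℚ))⁻¹ * U j k := by
    intro j M hjM
    rw [hDdef, PowerSeries.coeff_mk, fact_b lam t j, ← mul_assoc,
      inv_mul_cancel₀ (Nat.cast_ne_zero.2 j.factorial_ne_zero), one_mul]
    apply Finset.sum_subset (Finset.range_subset_range.2 (by omega))
    intro k _ hk'
    exact mul_eq_zero_of_right _ (hUvanish (by simpa using hk'))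
  have hHm : ∀ m : ℕ,
      (∑ p ∈ Finset.HasAntidiagonal.antidiagonal m, ((p.1.factorial:ℚ))⁻¹ * H p.1 * ((p.2.factorial:ℚ))⁻¹)
        = t * ((m.factorial:ℚ))⁻¹ * H m + (if m = 0 then 1 - t else 0) := by
    intro m
    have h1 : (PowerSeries.mk fun k => (k.factorial : ℚ)⁻¹ * H k) * PowerSeries.exp ℚ
        = PowerSeries.C (1 - t)
          + (PowerSeries.mk fun k => (k.factorial : ℚ)⁻¹ * H k) * PowerSeries.C t := by
      rw [← hH]; ring
    have h2 := congrArg (PowerSeries.coeff m) h1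
    rw [PowerSeries.coeff_mul, map_add, PowerSeries.coeff_C, PowerSeries.coeff_mul_C,
      PowerSeries.coeff_mk] at h2
    calc (∑ p ∈ Finset.HasAntidiagonal.antidiagonal m, ((p.1.factorial:ℚ))⁻¹ * H p.1 * ((p.2.factorial:ℚ))⁻¹)
        = ∑ p ∈ Finset.HasAntidiagonal.antidiagonal m,
            (PowerSeries.coeff p.1 (PowerSeries.mk fun k => (k.factorial : ℚ)⁻¹ * H k))
              * PowerSeries.coeff p.2 (PowerSeries.exp ℚ) := by
          apply Finset.sum_congr rfl
          intro p _
          rw [PowerSeries.coeff_mk, PowerSeries.coeff_exp]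
          simp [one_div]
      _ = t * ((m.factorial:ℚ))⁻¹ * H m + (if m = 0 then 1 - t else 0) := by
          rw [h2]; ring
  have key : Bs * (D - PowerSeries.C t) = PowerSeries.C (1 - t) := by
    ext N
    have hBD : PowerSeries.coeff N (Bs * D)
        = t * PowerSeries.coeff N Bs + (if N = 0 then 1 - t else 0) := by
      set S : Finset (ℕ × ℕ) := Finset.range (N+1) ×ˢ Finset.range (N+1) with hS
      set ψ : ℕ × ℕ → ℚ := fun q =>
        (H q.1 * (t-1)^q.1 * ((q.1.factorial:ℚ))⁻¹) * ((t-1)^q.2 * ((q.2.factorial:ℚ))⁻¹)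
          * U N (q.1 + q.2) with hψ
      have stepA : PowerSeries.coeff N (Bs * D) = ∑ q ∈ S, ψ q := by
        rw [PowerSeries.coeff_mul]
        calc ∑ p ∈ Finset.HasAntidiagonal.antidiagonal N,
                PowerSeries.coeff p.1 Bs * PowerSeries.coeff p.2 D
            = ∑ p ∈ Finset.HasAntidiagonal.antidiagonal N, ∑ q ∈ S,
                (H q.1 * (t-1)^q.1 * ((q.1.factorial:ℚ))⁻¹ * U p.1 q.1)
                  * ((t-1)^q.2 * ((q.2.factorial:ℚ))⁻¹ * U p.2 q.2) := by
              apply Finset.sum_congr rfl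
              intro p hp
              have hmem := Finset.HasAntidiagonal.mem_antidiagonal.1 hp
              rw [hBcoeff (show p.1 ≤ N by omega), hDcoeff (show p.2 ≤ N by omega),
                Finset.sum_mul_sum, ← Finset.sum_product']
          _ = ∑ q ∈ S, ∑ p ∈ Finset.HasAntidiagonal.antidiagonal N,
                (H q.1 * (t-1)^q.1 * ((q.1.factorial:ℚ))⁻¹ * U p.1 q.1)
                  * ((t-1)^q.2 * ((q.2.factorial:ℚ))⁻¹ * U p.2 q.2) := Finset.sum_comm
          _ = ∑ q ∈ S, ψ q := by
              apply Finset.sum_congr rfl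
              intro q _
              have hc : ∑ p ∈ Finset.HasAntidiagonal.antidiagonal N, U p.1 q.1 * U p.2 q.2
                  = U N (q.1 + q.2) := by
                show ∑ p ∈ Finset.HasAntidiagonal.antidiagonal N,
                    PowerSeries.coeff p.1 ((uu lam)^q.1)
                      * PowerSeries.coeff p.2 ((uu lam)^q.2)
                  = PowerSeries.coeff N ((uu lam)^(q.1 + q.2))
                rw [← PowerSeries.coeff_mul, ← pow_add]
              calc ∑ p ∈ Finset.HasAntidiagonal.antidiagonal N,
                    (H q.1 * (t-1)^q.1 * ((q.1.factorial:ℚ))⁻¹ * U p.1 q.1)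
                      * ((t-1)^q.2 * ((q.2.factorial:ℚ))⁻¹ * U p.2 q.2)
                  = (H q.1 * (t-1)^q.1 * ((q.1.factorial:ℚ))⁻¹)
                      * ((t-1)^q.2 * ((q.2.factorial:ℚ))⁻¹)
                      * ∑ p ∈ Finset.HasAntidiagonal.antidiagonal N, U p.1 q.1 * U p.2 q.2 := by
                    rw [Finset.mul_sum]
                    exact Finset.sum_congr rfl fun p _ => by ring
                _ = ψ q := by rw [hc]
      have stepB := (Finset.sum_fiberwise_of_maps_to (s := S)
        (t := Finset.range (2*N+1)) (g := fun q => q.1 + q.2)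
        (fun q hq => by
          rw [hS, Finset.mem_product, Finset.mem_range, Finset.mem_range] at hq
          show q.1 + q.2 ∈ Finset.range (2*N+1)
          rw [Finset.mem_range]; omega) ψ).symm
      have stepC : ∑ m ∈ Finset.range (2*N+1), ∑ q ∈ S with q.1 + q.2 = m, ψ q
          = ∑ m ∈ Finset.range (N+1), ∑ q ∈ S with q.1 + q.2 = m, ψ q := by
        symm
        apply Finset.sum_subset (Finset.range_subset_range.2 (by omega))
        intro m _ hm'
        apply Finset.sum_eq_zero
        intro q hq
        have h := (Finset.mem_filter.1 hq).2
        apply mul_eq_zero_of_right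
        rw [h]
        exact hUvanish (by simp at hm'; omega)
      have stepD : ∀ m ∈ Finset.range (N+1), (∑ q ∈ S with q.1 + q.2 = m, ψ q)
          = (t * ((m.factorial:ℚ))⁻¹ * H m + (if m = 0 then 1 - t else 0))
              * ((t-1)^m * U N m) := by
        intro m hm
        have hfil : (S.filter (fun q => q.1 + q.2 = m)) = Finset.HasAntidiagonal.antidiagonal m := by
          ext q
          rw [Finset.mem_filter, hS, Finset.mem_product, Finset.mem_range, Finset.mem_range,
            Finset.HasAntidiagonal.mem_antidiagonal]
          rw [Finset.mem_range] at hm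
          omega
        rw [hfil, ← hHm m, Finset.sum_mul]
        apply Finset.sum_congr rfl
        intro q hq
        have h := Finset.HasAntidiagonal.mem_antidiagonal.1 hq
        rw [hψ, ← h, pow_add]
        ring
      have stepE : ∑ m ∈ Finset.range (N+1),
            (t * ((m.factorial:ℚ))⁻¹ * H m + (if m = 0 then 1 - t else 0))
              * ((t-1)^m * U N m)
          = t * PowerSeries.coeff N Bs + (if N = 0 then 1 - t else 0) := by
        have split : ∀ m, (t * ((m.factorial:ℚ))⁻¹ * H m + (if m = 0 then 1 - t else 0))
              * ((t-1)^m * U N m)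
            = t * (H m * (t-1)^m * ((m.factorial:ℚ))⁻¹ * U N m)
              + (if m = 0 then (1-t) * ((t-1)^m * U N m) else 0) := by
          intro m
          split_ifs <;> ring
        rw [Finset.sum_congr rfl fun m _ => split m, Finset.sum_add_distrib,
          ← Finset.mul_sum, ← hBcoeff (le_refl N),
          Finset.sum_ite_eq' (Finset.range (N+1)) 0
            (fun m => (1-t) * ((t-1)^m * U N m)),
          if_pos (Finset.mem_range.2 (by omega))]
        congr 1
        have hU0 : U N 0 = (if N = 0 then 1 else 0) := by
          show PowerSeries.coeff N ((uu lam)^0) = _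
          rw [pow_zero, PowerSeries.coeff_one]
        rw [hU0, pow_zero, one_mul]
        split_ifs <;> ring
      rw [stepA, stepB, stepC, Finset.sum_congr rfl stepD, stepE]
    rw [mul_sub, map_sub, hBD, PowerSeries.coeff_mul_C, PowerSeries.coeff_C]
    ring
  have hunit : IsUnit (D - PowerSeries.C t) := by
    rw [PowerSeries.isUnit_iff_constantCoeff, map_sub, PowerSeries.constantCoeff_C]
    have : PowerSeries.constantCoeff D = 1 := by
      rw [hDdef, ← PowerSeries.coeff_zero_eq_constantCoeff, PowerSeries.coeff_mk]
      simp
    rw [this]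
    exact isUnit_iff_ne_zero.2 (sub_ne_zero.2 (Ne.symm ht))
  have hAB : (PowerSeries.mk fun n => (n.factorial : ℚ)⁻¹ * A n) = Bs :=
    hunit.mul_right_cancel (hA.trans key.symm)
  intro n
  have h := congrArg (PowerSeries.coeff n) hAB
  rw [PowerSeries.coeff_mk, hBcoeff (le_refl n)] at h
  have hfac : ((n.factorial:ℚ)) ≠ 0 := Nat.cast_ne_zero.2 n.factorial_ne_zero
  have hA' : A n = (n.factorial:ℚ)
      * ∑ k ∈ Finset.range (n+1), H k * (t-1)^k * ((k.factorial:ℚ))⁻¹ * U n k := by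
    rw [← h, ← mul_assoc, mul_inv_cancel₀ hfac, one_mul]
  rw [hA', Finset.mul_sum]
  apply Finset.sum_congr rfl
  intro k _
  rw [show lam ^ (n - k) * S1 n k * H k * (t - 1) ^ k
      = (lam ^ (n - k) * S1 n k) * (H k * (t - 1) ^ k) from by ring, lam_pow_S1]
  show (n.factorial:ℚ) * (H k * (t - 1) ^ k * ((k.factorial:ℚ))⁻¹
      * PowerSeries.coeff n ((uu lam)^k))
    = (n.factorial:ℚ) * ((k.factorial:ℚ))⁻¹ * PowerSeries.coeff n ((uu lam)^k)
      * (H k * (t - 1) ^ k)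
  ring
end
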